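/- Let α ≥ 0. There exists a constant c = c(α) > 0 such that for every ε ∈ (0,1) and every (ε,α)-thin set S ⊆ ℝ⁺, one has μ_α(S ∩ [x−1/2, x+1/2]) ≤ c ε μ_α([x−1/2, x+1/2]) for all x ≥ 1/2; consequently, if cε < 1, then the complement Ω = ℝ⁺∖S is (1−cε, 1/2)-relatively dense. -/

import Mathlib

open MeasureTheory Real Set

/-- The measure `dμ_α(x) = (2π^{α+1}/Γ(α+1)) x^{2α+1} dx` on `ℝ⁺ = [0,∞)`. -/
noncomputable def muB (α : ℝ) : Measure ℝ :=
  (volume.restrict (Set.Ici (0:ℝ))).withDensity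
    (fun x => ENNReal.ofReal (2 * π ^ (α+1) / Gamma (α+1) * x ^ (2*α+1)))

/-- `S` is `(ε,α)`-thin. -/
def Thin (α ε : ℝ) (S : Set ℝ) : Prop :=
  (∀ x : ℝ, 0 ≤ x → x ≤ 1 →
    muB α (S ∩ Set.Icc x (x+1)) ≤ ENNReal.ofReal ε * muB α (Set.Icc x (x+1))) ∧
  (∀ x : ℝ, 1 ≤ x →
    muB α (S ∩ Set.Icc x (x+1/x)) ≤ ENNReal.ofReal ε * muB α (Set.Icc x (x+1/x)))

/-- `Ω` is `(γ,a)`-relatively dense for `μ_α`. -/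
def RelDense (α γ a : ℝ) (Ω : Set ℝ) : Prop :=
  ∀ x, a ≤ x →
    ENNReal.ofReal γ * muB α (Set.Icc (x-a) (x+a)) ≤ muB α (Ω ∩ Set.Icc (x-a) (x+a))



lemma Cpos {α : ℝ} (hα : 0 ≤ α) : 0 < 2 * π ^ (α+1) / Gamma (α+1) := by
  have h1 : (0:ℝ) < π ^ (α+1) := rpow_pos_of_pos pi_pos _
  have h2 : (0:ℝ) < Gamma (α+1) := Gamma_pos_of_pos (by linarith)
  positivity

lemma muB_apply {α : ℝ} {A : Set ℝ} (hA : MeasurableSet A) (hA0 : A ⊆ Set.Ici 0) :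
    muB α A = ∫⁻ x in A, ENNReal.ofReal (2 * π ^ (α+1) / Gamma (α+1) * x ^ (2*α+1)) := by
  rw [muB, withDensity_apply _ hA, Measure.restrict_restrict hA,
    Set.inter_eq_left.mpr hA0]

lemma muB_Icc_le {α : ℝ} (hα : 0 ≤ α) {a b : ℝ} (h0 : 0 ≤ a) (hab : a ≤ b) :
    muB α (Set.Icc a b) ≤
      ENNReal.ofReal (2 * π ^ (α+1) / Gamma (α+1) * b ^ (2*α+1) * (b-a)) := by
  rw [muB_apply measurableSet_Icc (fun x hx => le_trans h0 hx.1)]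
  calc ∫⁻ x in Set.Icc a b, ENNReal.ofReal (2 * π ^ (α+1) / Gamma (α+1) * x ^ (2*α+1))
      ≤ ∫⁻ _ in Set.Icc a b, ENNReal.ofReal (2 * π ^ (α+1) / Gamma (α+1) * b ^ (2*α+1)) := by
        refine setLIntegral_mono measurable_const (fun x hx => ?_)
        refine ENNReal.ofReal_le_ofReal ?_
        have hxb : x ^ (2*α+1) ≤ b ^ (2*α+1) :=
          rpow_le_rpow (le_trans h0 hx.1) hx.2 (by linarith)
        exact mul_le_mul_of_nonneg_left hxb (Cpos hα).le
    _ = ENNReal.ofReal (2 * π ^ (α+1) / Gamma (α+1) * b ^ (2*α+1) * (b-a)) := by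
        rw [setLIntegral_const, Real.volume_Icc, ← ENNReal.ofReal_mul
          (mul_nonneg (Cpos hα).le (rpow_nonneg (h0.trans hab) _))]

lemma le_muB_Icc {α : ℝ} (hα : 0 ≤ α) {a b : ℝ} (h0 : 0 ≤ a) (hab : a ≤ b) :
    ENNReal.ofReal (2 * π ^ (α+1) / Gamma (α+1) * a ^ (2*α+1) * (b-a)) ≤
      muB α (Set.Icc a b) := by
  rw [muB_apply measurableSet_Icc (fun x hx => le_trans h0 hx.1)]
  calc ENNReal.ofReal (2 * π ^ (α+1) / Gamma (α+1) * a ^ (2*α+1) * (b-a))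
      = ∫⁻ _ in Set.Icc a b, ENNReal.ofReal (2 * π ^ (α+1) / Gamma (α+1) * a ^ (2*α+1)) := by
        rw [setLIntegral_const, Real.volume_Icc, ← ENNReal.ofReal_mul (by positivity)]
    _ ≤ ∫⁻ x in Set.Icc a b, ENNReal.ofReal (2 * π ^ (α+1) / Gamma (α+1) * x ^ (2*α+1)) := by
        refine setLIntegral_mono ?_ (fun x hx => ?_)
        · fun_prop
        refine ENNReal.ofReal_le_ofReal ?_
        have hxb : a ^ (2*α+1) ≤ x ^ (2*α+1) :=
          rpow_le_rpow h0 hx.1 (by linarith)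
        exact mul_le_mul_of_nonneg_left hxb (Cpos hα).le

lemma key {α ε : ℝ} (hα : 0 ≤ α) (hε : 0 < ε) {S : Set ℝ}
    (hthin2 : ∀ x : ℝ, 1 ≤ x →
      muB α (S ∩ Set.Icc x (x+1/x)) ≤ ENNReal.ofReal ε * muB α (Set.Icc x (x+1/x)))
    {a : ℝ} (ha : 1 ≤ a) :
    muB α (S ∩ Set.Icc a (a+1)) ≤
      ENNReal.ofReal ((3:ℝ)^(2*α+2) * ε) * muB α (Set.Icc a (a+1)) := by
  set C := 2 * π ^ (α+1) / Gamma (α+1) with hC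
  have hCpos : 0 < C := Cpos hα
  set N := ⌈a+1⌉₊ with hN
  have hNpos : 0 < N := Nat.ceil_pos.mpr (by linarith)
  have hNR : (0:ℝ) < N := by exact_mod_cast hNpos
  have hN1 : (a+1:ℝ) ≤ N := Nat.le_ceil _
  have hN2 : (N:ℝ) ≤ a+2 := by
    have := Nat.ceil_lt_add_one (show (0:ℝ) ≤ a+1 by linarith)
    linarith
  have hNinv : (0:ℝ) < 1/(N:ℝ) := by positivity
  set t : ℕ → ℝ := fun k => a + k / N with ht
  -- basic facts about t k for k < N
  have htfacts : ∀ k, k < N → 1 ≤ t k ∧ t k ≤ a + 1 - 1/N ∧ t k ≤ (N:ℝ) := by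
    intro k hk
    have hk' : (k:ℝ) ≤ (N:ℝ) - 1 := by
      have : (k:ℝ) + 1 ≤ N := by exact_mod_cast hk
      linarith
    have hd0 : 0 ≤ (k:ℝ)/N := by positivity
    have hd : (k:ℝ)/N ≤ 1 - 1/N := by
      have h5 : (k:ℝ)/N ≤ ((N:ℝ)-1)/N := by gcongr
      have h3 : ((N:ℝ)-1)/N = 1 - 1/N := by field_simp
      linarith [h3 ▸ h5]
    refine ⟨by simp only [ht]; linarith, by simp only [ht]; linarith,
      by simp only [ht]; linarith⟩
  -- covering
  have cover : S ∩ Set.Icc a (a+1) ⊆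
      ⋃ k ∈ Finset.range N, S ∩ Set.Icc (t k) (t k + 1/(t k)) := by
    rintro y ⟨hyS, hya, hyb⟩
    set k := min ⌊(y-a)*N⌋₊ (N-1) with hk
    have hkN : k < N := lt_of_le_of_lt (min_le_right _ _) (Nat.sub_lt hNpos one_pos)
    obtain ⟨htk1, htk2, htk3⟩ := htfacts k hkN
    have htkpos : (0:ℝ) < t k := by linarith
    have hklow : (k:ℝ) ≤ (y-a)*N := by
      have h0 : (0:ℝ) ≤ (y-a)*N := mul_nonneg (by linarith) hNR.le
      calc (k:ℝ) ≤ (⌊(y-a)*N⌋₊:ℝ) := by exact_mod_cast min_le_left _ _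
        _ ≤ (y-a)*N := Nat.floor_le h0
    have hkup : (y-a)*N ≤ (k:ℝ)+1 := by
      rcases le_or_gt ⌊(y-a)*N⌋₊ (N-1) with h | h
      · have hke : k = ⌊(y-a)*N⌋₊ := min_eq_left h
        rw [hke]
        exact (Nat.lt_floor_add_one _).le
      · have hke : k = N-1 := min_eq_right h.le
        have hcast : ((N-1:ℕ):ℝ) + 1 = N := by
          have h1 : 1 ≤ N := hNpos
          push_cast [Nat.cast_sub h1]
          ring
        rw [hke, hcast]
        have : y - a ≤ 1 := by linarith
        nlinarith
    refine Set.mem_biUnion (Finset.mem_range.mpr hkN) ⟨hyS, ?_, ?_⟩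
    · have : (k:ℝ)/N ≤ y - a := by rw [div_le_iff₀ hNR]; exact hklow
      simp only [ht]; linarith
    · have h1 : y ≤ t k + 1/N := by
        have : y - a ≤ ((k:ℝ)+1)/N := by rw [le_div_iff₀ hNR]; exact hkup
        have h2 : ((k:ℝ)+1)/N = (k:ℝ)/N + 1/N := by ring
        simp only [ht]; linarith [this, h2.le]
      have h2 : 1/(N:ℝ) ≤ 1/(t k) := one_div_le_one_div_of_le htkpos htk3
      linarith
  -- per-term bound
  have term : ∀ k ∈ Finset.range N,
      muB α (S ∩ Set.Icc (t k) (t k + 1/(t k))) ≤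
        ENNReal.ofReal (ε * (C * (a+2)^(2*α+1) * (1/a))) := by
    intro k hk
    obtain ⟨htk1, htk2, _⟩ := htfacts k (Finset.mem_range.mp hk)
    have htkpos : (0:ℝ) < t k := by linarith
    have htnn : (0:ℝ) ≤ t k := htkpos.le
    have hib : t k ≤ t k + 1/(t k) := by
      have : 0 < 1/(t k) := by positivity
      linarith
    calc muB α (S ∩ Set.Icc (t k) (t k + 1/(t k)))
        ≤ ENNReal.ofReal ε * muB α (Set.Icc (t k) (t k + 1/(t k))) := hthin2 (t k) htk1
      _ ≤ ENNReal.ofReal ε *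
          ENNReal.ofReal (C * (t k + 1/(t k))^(2*α+1) * (t k + 1/(t k) - t k)) :=
          mul_le_mul_right (muB_Icc_le hα htnn hib) _
      _ ≤ ENNReal.ofReal (ε * (C * (a+2)^(2*α+1) * (1/a))) := by
          rw [← ENNReal.ofReal_mul hε.le]
          apply ENNReal.ofReal_le_ofReal
          have he : t k + 1/(t k) - t k = 1/(t k) := by ring
          rw [he]
          have hb1 : 1/(t k) ≤ 1 := by
            rw [div_le_one htkpos]; exact htk1
          have hbig : t k + 1/(t k) ≤ a + 2 := by linarith [htk2, hb1, hNinv]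
          have h1 : (t k + 1/(t k))^(2*α+1) ≤ (a+2)^(2*α+1) :=
            rpow_le_rpow (by positivity) hbig (by linarith)
          have hat : a ≤ t k := by
            have : 0 ≤ ((k:ℝ))/N := by positivity
            simp only [ht]; linarith
          have h2 : 1/(t k) ≤ 1/a :=
            one_div_le_one_div_of_le (by linarith) hat
          have hrnn : (0:ℝ) ≤ (t k + 1/(t k))^(2*α+1) := rpow_nonneg (by positivity) _
          have hc' : (0:ℝ) ≤ 1/(t k) := by positivity
          have hb' : (0:ℝ) ≤ C * (a+2)^(2*α+1) :=
            mul_nonneg hCpos.le (rpow_nonneg (by linarith) _)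
          have := mul_le_mul (mul_le_mul_of_nonneg_left h1 hCpos.le) h2 hc' hb'
          exact mul_le_mul_of_nonneg_left this hε.le
  -- real inequality for the total
  have realineq : (N:ℝ) * (ε * (C * (a+2)^(2*α+1) * (1/a))) ≤
      (3:ℝ)^(2*α+2) * ε * (C * a^(2*α+1) * (a+1-a)) := by
    have ha0 : (0:ℝ) < a := by linarith
    have h1 : (a+2)^(2*α+1) ≤ 3^(2*α+1) * a^(2*α+1) := by
      have : (a+2:ℝ) ≤ 3*a := by linarith
      calc (a+2)^(2*α+1) ≤ (3*a)^(2*α+1) := rpow_le_rpow (by linarith) this (by linarith)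
        _ = 3^(2*α+1) * a^(2*α+1) := mul_rpow (by norm_num) ha0.le
    have h3 : (3:ℝ)^(2*α+2) = 3^(2*α+1) * 3 := by
      rw [← Real.rpow_add_one (by norm_num : (3:ℝ) ≠ 0) (2*α+1)]
      ring_nf
    have hN3 : (N:ℝ) ≤ 3*a := by linarith
    have hannn : (0:ℝ) ≤ a^(2*α+1) := rpow_nonneg ha0.le _
    have h3nn : (0:ℝ) ≤ (3:ℝ)^(2*α+1) := rpow_nonneg (by norm_num) _
    have key : (N:ℝ) * (a+2)^(2*α+1) * (1/a) ≤ 3^(2*α+2) * a^(2*α+1) := by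
      have hstep : (N:ℝ) * (a+2)^(2*α+1) ≤ (3*a) * (3^(2*α+1) * a^(2*α+1)) := by
        apply mul_le_mul hN3 h1 (rpow_nonneg (by linarith) _) (by linarith)
      calc (N:ℝ) * (a+2)^(2*α+1) * (1/a) ≤ (3*a) * (3^(2*α+1) * a^(2*α+1)) * (1/a) := by
            apply mul_le_mul_of_nonneg_right hstep (by positivity)
        _ = 3^(2*α+2) * a^(2*α+1) := by
            rw [h3]; field_simp
    calc (N:ℝ) * (ε * (C * (a+2)^(2*α+1) * (1/a)))
        = (ε * C) * ((N:ℝ) * (a+2)^(2*α+1) * (1/a)) := by ring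
      _ ≤ (ε * C) * (3^(2*α+2) * a^(2*α+1)) := by
          apply mul_le_mul_of_nonneg_left key (by positivity)
      _ = (3:ℝ)^(2*α+2) * ε * (C * a^(2*α+1) * (a+1-a)) := by ring
  -- assemble
  calc muB α (S ∩ Set.Icc a (a+1))
      ≤ muB α (⋃ k ∈ Finset.range N, S ∩ Set.Icc (t k) (t k + 1/(t k))) :=
        measure_mono cover
    _ ≤ ∑ k ∈ Finset.range N, muB α (S ∩ Set.Icc (t k) (t k + 1/(t k))) :=
        measure_biUnion_finset_le _ _
    _ ≤ ∑ _k ∈ Finset.range N, ENNReal.ofReal (ε * (C * (a+2)^(2*α+1) * (1/a))) :=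
        Finset.sum_le_sum term
    _ = (N:ENNReal) * ENNReal.ofReal (ε * (C * (a+2)^(2*α+1) * (1/a))) := by
        rw [Finset.sum_const, Finset.card_range, nsmul_eq_mul]
    _ = ENNReal.ofReal ((N:ℝ) * (ε * (C * (a+2)^(2*α+1) * (1/a)))) := by
        rw [← ENNReal.ofReal_natCast N, ← ENNReal.ofReal_mul (Nat.cast_nonneg N)]
    _ ≤ ENNReal.ofReal ((3:ℝ)^(2*α+2) * ε * (C * a^(2*α+1) * (a+1-a))) :=
        ENNReal.ofReal_le_ofReal realineq
    _ = ENNReal.ofReal ((3:ℝ)^(2*α+2) * ε) *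
        ENNReal.ofReal (C * a^(2*α+1) * (a+1-a)) := by
        rw [← ENNReal.ofReal_mul (by positivity)]
    _ ≤ ENNReal.ofReal ((3:ℝ)^(2*α+2) * ε) * muB α (Set.Icc a (a+1)) :=
        mul_le_mul_right (le_muB_Icc hα (by linarith) (by linarith)) _

/-- The complement of an `(ε,α)`-thin set is `(1 − cε, 1/2)`-relatively dense. -/
theorem complement_of_thin_relDense {α : ℝ} (hα : 0 ≤ α) :
    ∃ c > (0:ℝ), ∀ ε : ℝ, 0 < ε → ε < 1 →
      ∀ S : Set ℝ, MeasurableSet S → S ⊆ Set.Ici 0 → Thin α ε S →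
        (∀ x : ℝ, 1/2 ≤ x →
          muB α (S ∩ Set.Icc (x - 1/2) (x + 1/2)) ≤
            ENNReal.ofReal (c * ε) * muB α (Set.Icc (x - 1/2) (x + 1/2))) ∧
        (c * ε < 1 → RelDense α (1 - c * ε) (1/2) (Set.Ici 0 \ S)) := by
  refine ⟨(3:ℝ)^(2*α+2), rpow_pos_of_pos (by norm_num) _, ?_⟩
  intro ε hε hε1 S hS hS0 hthin
  have hc1 : (1:ℝ) ≤ (3:ℝ)^(2*α+2) :=
    one_le_rpow (by norm_num) (by linarith)
  have main : ∀ x : ℝ, 1/2 ≤ x →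
      muB α (S ∩ Set.Icc (x - 1/2) (x + 1/2)) ≤
        ENNReal.ofReal ((3:ℝ)^(2*α+2) * ε) * muB α (Set.Icc (x - 1/2) (x + 1/2)) := by
    intro x hx
    have hrw : x + 1/2 = (x - 1/2) + 1 := by ring
    rcases le_or_gt (3/2) x with h | h
    · rw [hrw]
      exact key hα hε hthin.2 (by linarith)
    · rw [hrw]
      calc muB α (S ∩ Set.Icc (x - 1/2) ((x - 1/2) + 1))
          ≤ ENNReal.ofReal ε * muB α (Set.Icc (x - 1/2) ((x - 1/2) + 1)) :=
            hthin.1 (x - 1/2) (by linarith) (by linarith)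
        _ ≤ ENNReal.ofReal ((3:ℝ)^(2*α+2) * ε) * muB α (Set.Icc (x - 1/2) ((x - 1/2) + 1)) := by
            apply mul_le_mul_left
            apply ENNReal.ofReal_le_ofReal
            exact le_mul_of_one_le_left hε.le hc1
  refine ⟨main, ?_⟩
  intro hcε x hx
  set W := Set.Icc (x - 1/2) (x + 1/2) with hW
  have hWsub : W ⊆ Set.Ici (0:ℝ) := fun y hy => le_trans (by linarith) hy.1
  have hset : (Set.Ici 0 \ S) ∩ W = W \ S := by
    ext y
    constructor
    · rintro ⟨⟨_, hyS⟩, hyW⟩; exact ⟨hyW, hyS⟩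
    · rintro ⟨hyW, hyS⟩; exact ⟨⟨hWsub hyW, hyS⟩, hyW⟩
  rw [hset]
  have hWfin : muB α W ≠ ⊤ :=
    ne_top_of_le_ne_top ENNReal.ofReal_ne_top (muB_Icc_le hα (by linarith) (by linarith))
  have hsplit : muB α (W ∩ S) + muB α (W \ S) = muB α W := measure_inter_add_diff W hS
  have hWS : muB α (W ∩ S) ≤ ENNReal.ofReal ((3:ℝ)^(2*α+2) * ε) * muB α W := by
    rw [Set.inter_comm]; exact main x hx
  have hfin2 : ENNReal.ofReal ((3:ℝ)^(2*α+2) * ε) * muB α W ≠ ⊤ :=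
    ENNReal.mul_ne_top ENNReal.ofReal_ne_top hWfin
  have hone : ENNReal.ofReal (1 - (3:ℝ)^(2*α+2) * ε) * muB α W +
      ENNReal.ofReal ((3:ℝ)^(2*α+2) * ε) * muB α W = muB α W := by
    rw [← add_mul, ← ENNReal.ofReal_add (by linarith) (by positivity)]
    norm_num
  have hfinal : ENNReal.ofReal (1 - (3:ℝ)^(2*α+2) * ε) * muB α W +
      ENNReal.ofReal ((3:ℝ)^(2*α+2) * ε) * muB α W ≤
      muB α (W \ S) + ENNReal.ofReal ((3:ℝ)^(2*α+2) * ε) * muB α W := by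
    rw [hone]
    calc muB α W = muB α (W ∩ S) + muB α (W \ S) := hsplit.symm
      _ ≤ ENNReal.ofReal ((3:ℝ)^(2*α+2) * ε) * muB α W + muB α (W \ S) :=
          add_le_add hWS le_rfl
      _ = muB α (W \ S) + ENNReal.ofReal ((3:ℝ)^(2*α+2) * ε) * muB α W := add_comm _ _
  exact (ENNReal.add_le_add_iff_right hfin2).mp hfinal
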